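/- Key entropy lemma for the S-SMDC converse: Let α ≥ 1, let S_1,…,S_α be mutually independent random variables each taking values in a finite set, let X and Y be random variables jointly distributed with them (each taking values in a finite set), and let δ ≥ 0. Suppose that H(S_1,…,S_α | X, Y) ≤ δ (near-perfect reconstruction from (X,Y)) and H(S_1,…,S_α | Y) = H(S_1,…,S_α) (perfect secrecy from Y alone). Then H(X | S_1,…,S_{α−1}, Y) ≥ H(S_α) − δ + H(X | S_1,…,S_α, Y), where for α = 1 the conditioning on S_1,…,S_{α−1} on the left-hand side is vacuous. -/

import Mathlib

open MeasureTheory ProbabilityTheory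

noncomputable def entH {Ω : Type*} [MeasurableSpace Ω] (μ : Measure Ω)
    {S : Type*} [Fintype S] (X : Ω → S) : ℝ :=
  ∑ s : S, Real.negMulLog ((μ (X ⁻¹' {s})).toReal)

noncomputable def condEntH {Ω : Type*} [MeasurableSpace Ω] (μ : Measure Ω)
    {S T : Type*} [Fintype S] [Fintype T] (X : Ω → S) (Y : Ω → T) : ℝ :=
  entH μ (fun ω => (X ω, Y ω)) - entH μ Y

def jointOn {Ω : Type*} {ι : Type*} {S : ι → Type*} (X : ∀ i, Ω → S i) (U : Finset ι) :
    Ω → ((i : U) → S i) := fun ω i => X i ω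

noncomputable def entHset {Ω : Type*} [MeasurableSpace Ω] (μ : Measure Ω)
    {ι : Type*} [DecidableEq ι] {S : ι → Type*} [∀ i, Fintype (S i)]
    (X : ∀ i, Ω → S i) (U : Finset ι) : ℝ :=
  entH μ (jointOn X U)

noncomputable def condEntHset {Ω : Type*} [MeasurableSpace Ω] (μ : Measure Ω)
    {ι : Type*} [DecidableEq ι] {S : ι → Type*} [∀ i, Fintype (S i)]
    (X : ∀ i, Ω → S i) (U A : Finset ι) : ℝ :=
  condEntH μ (jointOn X U) (jointOn X A)

section SSMDCHelpers

set_option linter.unusedSectionVars false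

variable {Ω : Type*} [MeasurableSpace Ω] (μ : Measure Ω)

private lemma entH_comp_inj {S S' : Type*} [Fintype S] [Fintype S'] (U : Ω → S)
    {e : S → S'} (he : Function.Injective e) :
    entH μ (fun ω => e (U ω)) = entH μ U := by
  classical
  unfold entH
  rw [← Finset.sum_subset (Finset.subset_univ (Finset.univ.image e))
    (fun s' _ hs' => by
      have h0 : (fun ω => e (U ω)) ⁻¹' {s'} = ∅ := by
        ext ω
        simp only [Set.mem_preimage, Set.mem_singleton_iff, Set.mem_empty_iff_false, iff_false]
        intro h
        exact hs' (Finset.mem_image.mpr ⟨U ω, Finset.mem_univ _, h⟩)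
      simp [h0])]
  rw [Finset.sum_image (fun a _ b _ h => he h)]
  refine Finset.sum_congr rfl fun s _ => ?_
  have hpre : (fun ω => e (U ω)) ⁻¹' {e s} = U ⁻¹' {s} := by
    ext ω; simp [he.eq_iff]
  rw [hpre]

private lemma sum_toReal_measure_preimage [IsProbabilityMeasure μ] {S : Type*} [Fintype S]
    [MeasurableSpace S] [MeasurableSingletonClass S] {U : Ω → S} (hU : Measurable U) :
    ∑ s : S, (μ (U ⁻¹' {s})).toReal = 1 := by
  have h := sum_measure_preimage_singleton (μ := μ) (Finset.univ : Finset S)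
      (fun s _ => hU (measurableSet_singleton s))
  rw [Finset.coe_univ, Set.preimage_univ, measure_univ] at h
  rw [← ENNReal.toReal_sum (fun s _ => measure_ne_top μ _), h, ENNReal.toReal_one]

private lemma negMulLog_sum_le {ι : Type*} (s : Finset ι) (a : ι → ℝ)
    (ha : ∀ i ∈ s, 0 ≤ a i) :
    Real.negMulLog (∑ i ∈ s, a i) ≤ ∑ i ∈ s, Real.negMulLog (a i) := by
  have h1 : Real.negMulLog (∑ i ∈ s, a i)
      = ∑ i ∈ s, -(a i * Real.log (∑ j ∈ s, a j)) := by
    simp only [Real.negMulLog, neg_mul, Finset.sum_mul, ← Finset.sum_neg_distrib]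
  rw [h1]
  refine Finset.sum_le_sum fun i hi => ?_
  rcases eq_or_lt_of_le (ha i hi) with h0 | hpos
  · simp [← h0, Real.negMulLog]
  · rw [Real.negMulLog, neg_mul]
    apply neg_le_neg
    exact mul_le_mul_of_nonneg_left
      (Real.log_le_log hpos (Finset.single_le_sum ha hi)) (le_of_lt hpos)

private lemma entH_comp_le [IsProbabilityMeasure μ] {S S' : Type*} [Fintype S] [Fintype S']
    [MeasurableSpace S] [MeasurableSingletonClass S] {U : Ω → S} (hU : Measurable U)
    (g : S → S') :
    entH μ (fun ω => g (U ω)) ≤ entH μ U := by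
  classical
  unfold entH
  have key : ∀ t : S', (μ ((fun ω => g (U ω)) ⁻¹' {t})).toReal
      = ∑ s ∈ Finset.univ.filter (fun s => g s = t), (μ (U ⁻¹' {s})).toReal := by
    intro t
    have hset : (fun ω => g (U ω)) ⁻¹' {t}
        = U ⁻¹' ↑(Finset.univ.filter (fun s => g s = t)) := by
      ext ω; simp
    rw [hset, ← sum_measure_preimage_singleton _ (fun s _ => hU (measurableSet_singleton s)),
      ENNReal.toReal_sum (fun s _ => measure_ne_top μ _)]
  calc ∑ t : S', Real.negMulLog ((μ ((fun ω => g (U ω)) ⁻¹' {t})).toReal)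
      ≤ ∑ t : S', ∑ s ∈ Finset.univ.filter (fun s => g s = t),
          Real.negMulLog ((μ (U ⁻¹' {s})).toReal) := by
        refine Finset.sum_le_sum fun t _ => ?_
        rw [key t]
        exact negMulLog_sum_le _ _ (fun s _ => ENNReal.toReal_nonneg)
    _ = ∑ s : S, Real.negMulLog ((μ (U ⁻¹' {s})).toReal) :=
        Finset.sum_fiberwise _ _ _

private lemma gibbs {ι : Type*} [Fintype ι] (p q : ι → ℝ)
    (hp : ∀ i, 0 ≤ p i) (hq : ∀ i, 0 ≤ q i) (hpq : ∀ i, q i = 0 → p i = 0)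
    (hp1 : ∑ i, p i = 1) (hq1 : ∑ i, q i ≤ 1) :
    ∑ i, Real.negMulLog (p i) ≤ ∑ i, -(p i * Real.log (q i)) := by
  have key : ∀ i, p i * Real.log (q i) - p i * Real.log (p i) ≤ q i - p i := by
    intro i
    rcases eq_or_lt_of_le (hp i) with h0 | hppos
    · simp only [← h0, zero_mul, sub_zero]
      simpa using hq i
    · have hqpos : 0 < q i := by
        rcases eq_or_lt_of_le (hq i) with hq0 | hq0
        · exact absurd (hpq i hq0.symm) (ne_of_gt hppos)
        · exact hq0
      have hlog := Real.log_le_sub_one_of_pos (div_pos hqpos hppos)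
      rw [Real.log_div (ne_of_gt hqpos) (ne_of_gt hppos)] at hlog
      have h2 := mul_le_mul_of_nonneg_left hlog (le_of_lt hppos)
      have h3 : p i * (q i / p i - 1) = q i - p i := by field_simp
      rw [h3, mul_sub] at h2
      linarith
  have hsum : ∑ i, (p i * Real.log (q i) - p i * Real.log (p i))
      ≤ ∑ i, (q i - p i) := Finset.sum_le_sum fun i _ => key i
  rw [Finset.sum_sub_distrib, Finset.sum_sub_distrib, hp1] at hsum
  have e1 : ∑ i, Real.negMulLog (p i) = -∑ i, p i * Real.log (p i) := by
    simp only [Real.negMulLog, neg_mul, Finset.sum_neg_distrib]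
  have e2 : ∑ i, -(p i * Real.log (q i)) = -∑ i, p i * Real.log (q i) := by
    simp only [Finset.sum_neg_distrib]
  rw [e1, e2]
  linarith

variable [IsProbabilityMeasure μ]
variable {S S' : Type*} [Fintype S] [Fintype S'] [MeasurableSpace S]
  [MeasurableSingletonClass S] [MeasurableSpace S'] [MeasurableSingletonClass S']

private lemma marginal_fst {U : Ω → S} {V : Ω → S'} (hU : Measurable U) (hV : Measurable V)
    (a : S) :
    (μ (U ⁻¹' {a})).toReal = ∑ b : S', (μ ((fun ω => (U ω, V ω)) ⁻¹' {(a, b)})).toReal := by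
  classical
  have hW : Measurable (fun ω => (U ω, V ω)) := hU.prodMk hV
  have hset : U ⁻¹' {a}
      = (fun ω => (U ω, V ω)) ⁻¹' ↑(({a} : Finset S) ×ˢ (Finset.univ : Finset S')) := by
    ext ω; simp [eq_comm]
  rw [hset, ← sum_measure_preimage_singleton _ (fun c _ => hW (measurableSet_singleton c)),
    ENNReal.toReal_sum (fun c _ => measure_ne_top μ _), Finset.sum_product,
    Finset.sum_singleton]

private lemma marginal_snd {U : Ω → S} {V : Ω → S'} (hU : Measurable U) (hV : Measurable V)
    (b : S') :
    (μ (V ⁻¹' {b})).toReal = ∑ a : S, (μ ((fun ω => (U ω, V ω)) ⁻¹' {(a, b)})).toReal := by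
  classical
  have hW : Measurable (fun ω => (U ω, V ω)) := hU.prodMk hV
  have hset : V ⁻¹' {b}
      = (fun ω => (U ω, V ω)) ⁻¹' ↑((Finset.univ : Finset S) ×ˢ ({b} : Finset S')) := by
    ext ω; simp [eq_comm]
  rw [hset, ← sum_measure_preimage_singleton _ (fun c _ => hW (measurableSet_singleton c)),
    ENNReal.toReal_sum (fun c _ => measure_ne_top μ _), Finset.sum_product]
  simp

private lemma entH_pair_le {U : Ω → S} {V : Ω → S'} (hU : Measurable U) (hV : Measurable V) :
    entH μ (fun ω => (U ω, V ω)) ≤ entH μ U + entH μ V := by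
  classical
  set W := fun ω => (U ω, V ω) with hWdef
  have hW : Measurable W := hU.prodMk hV
  set p : S × S' → ℝ := fun c => (μ (W ⁻¹' {c})).toReal with hpdef
  have hpnn : ∀ c, 0 ≤ p c := fun c => ENNReal.toReal_nonneg
  set pU : S → ℝ := fun a => (μ (U ⁻¹' {a})).toReal with hpU
  set pV : S' → ℝ := fun b => (μ (V ⁻¹' {b})).toReal with hpV
  have hma : ∀ a, pU a = ∑ b, p (a, b) := fun a => marginal_fst μ hU hV a
  have hmb : ∀ b, pV b = ∑ a, p (a, b) := fun b => marginal_snd μ hU hV b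
  have hU1 : ∑ a, pU a = 1 := sum_toReal_measure_preimage μ hU
  have hV1 : ∑ b, pV b = 1 := sum_toReal_measure_preimage μ hV
  have hp1 : ∑ c, p c = 1 := sum_toReal_measure_preimage μ hW
  set q : S × S' → ℝ := fun c => pU c.1 * pV c.2 with hqdef
  have hqnn : ∀ c, 0 ≤ q c := fun c => mul_nonneg ENNReal.toReal_nonneg ENNReal.toReal_nonneg
  have hple : ∀ c : S × S', p c ≤ pU c.1 := by
    intro c
    rw [hma]
    exact Finset.single_le_sum (fun b _ => hpnn (c.1, b)) (Finset.mem_univ c.2)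
  have hple2 : ∀ c : S × S', p c ≤ pV c.2 := by
    intro c
    rw [hmb]
    exact Finset.single_le_sum (fun a _ => hpnn (a, c.2)) (Finset.mem_univ c.1)
  have hpq : ∀ c, q c = 0 → p c = 0 := by
    intro c hc
    rcases mul_eq_zero.mp hc with h | h
    · exact le_antisymm (h ▸ hple c) (hpnn c)
    · exact le_antisymm (h ▸ hple2 c) (hpnn c)
  have hq1 : ∑ c, q c = 1 := by
    rw [hqdef]
    rw [show (∑ c : S × S', pU c.1 * pV c.2) = ∑ a, ∑ b, pU a * pV b from
      Fintype.sum_prod_type _]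
    rw [← Finset.sum_mul_sum, hU1, hV1, mul_one]
  have hgibbs := gibbs p q hpnn hqnn hpq hp1 (le_of_eq hq1)
  have hsplit : ∀ c : S × S', -(p c * Real.log (q c))
      = -(p c * Real.log (pU c.1)) + -(p c * Real.log (pV c.2)) := by
    intro c
    rcases eq_or_lt_of_le (hpnn c) with h0 | hpos
    · rw [← h0]; ring
    · have h1 : pU c.1 ≠ 0 := fun h => absurd (hpq c (by rw [hqdef]; simp [h])) (ne_of_gt hpos)
      have h2 : pV c.2 ≠ 0 := fun h => absurd (hpq c (by rw [hqdef]; simp [h])) (ne_of_gt hpos)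
      rw [hqdef]
      show -(p c * Real.log (pU c.1 * pV c.2)) = _
      rw [Real.log_mul h1 h2]
      ring
  have hfinal : ∑ c : S × S', -(p c * Real.log (q c)) = entH μ U + entH μ V := by
    rw [Finset.sum_congr rfl (fun c _ => hsplit c), Finset.sum_add_distrib]
    congr 1
    · rw [show (∑ c : S × S', -(p c * Real.log (pU c.1)))
          = ∑ a, ∑ b, -(p (a, b) * Real.log (pU a)) from Fintype.sum_prod_type _]
      unfold entH
      refine Finset.sum_congr rfl fun a _ => ?_
      rw [Real.negMulLog, neg_mul]
      rw [show (μ (U ⁻¹' {a})).toReal = pU a from rfl, hma a, Finset.sum_mul,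
        ← Finset.sum_neg_distrib]
    · rw [show (∑ c : S × S', -(p c * Real.log (pV c.2)))
          = ∑ b, ∑ a, -(p (a, b) * Real.log (pV b)) from by
            rw [Fintype.sum_prod_type _]; exact Finset.sum_comm]
      unfold entH
      refine Finset.sum_congr rfl fun b _ => ?_
      rw [Real.negMulLog, neg_mul]
      rw [show (μ (V ⁻¹' {b})).toReal = pV b from rfl, hmb b, Finset.sum_mul,
        ← Finset.sum_neg_distrib]
  calc entH μ W = ∑ c, Real.negMulLog (p c) := rfl
    _ ≤ ∑ c, -(p c * Real.log (q c)) := hgibbs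
    _ = entH μ U + entH μ V := hfinal

private lemma entH_pair_of_indep {U : Ω → S} {V : Ω → S'} (hU : Measurable U)
    (hV : Measurable V) (h : IndepFun U V μ) :
    entH μ (fun ω => (U ω, V ω)) = entH μ U + entH μ V := by
  classical
  have hfac : ∀ (a : S) (b : S'), (μ ((fun ω => (U ω, V ω)) ⁻¹' {(a, b)})).toReal
      = (μ (U ⁻¹' {a})).toReal * (μ (V ⁻¹' {b})).toReal := by
    intro a b
    have hset : (fun ω => (U ω, V ω)) ⁻¹' {(a, b)} = U ⁻¹' {a} ∩ V ⁻¹' {b} := by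
      ext ω; simp [Prod.ext_iff]
    rw [hset, h.measure_inter_preimage_eq_mul _ _ (measurableSet_singleton a)
      (measurableSet_singleton b), ENNReal.toReal_mul]
  have hU1 : ∑ a, (μ (U ⁻¹' {a})).toReal = 1 := sum_toReal_measure_preimage μ hU
  have hV1 : ∑ b, (μ (V ⁻¹' {b})).toReal = 1 := sum_toReal_measure_preimage μ hV
  unfold entH
  rw [Fintype.sum_prod_type]
  calc ∑ a, ∑ b, Real.negMulLog ((μ ((fun ω => (U ω, V ω)) ⁻¹' {(a, b)})).toReal)
      = ∑ a, ∑ b, ((μ (V ⁻¹' {b})).toReal * Real.negMulLog ((μ (U ⁻¹' {a})).toReal)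
          + (μ (U ⁻¹' {a})).toReal * Real.negMulLog ((μ (V ⁻¹' {b})).toReal)) := by
        refine Finset.sum_congr rfl fun a _ => Finset.sum_congr rfl fun b _ => ?_
        rw [hfac a b, Real.negMulLog_mul]
    _ = ∑ a, (Real.negMulLog ((μ (U ⁻¹' {a})).toReal)
          + (μ (U ⁻¹' {a})).toReal * ∑ b, Real.negMulLog ((μ (V ⁻¹' {b})).toReal)) := by
        refine Finset.sum_congr rfl fun a _ => ?_
        rw [Finset.sum_add_distrib, ← Finset.sum_mul, hV1, one_mul, ← Finset.mul_sum]
    _ = _ := by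
        rw [Finset.sum_add_distrib, ← Finset.sum_mul, hU1, one_mul]

end SSMDCHelpers

set_option maxHeartbeats 1000000 in
private theorem ssmdc_key_aux
    {Ω : Type*} [MeasurableSpace Ω] (μ : Measure Ω) [IsProbabilityMeasure μ]
    {α : ℕ} (hα : 1 ≤ α)
    {T : Fin α → Type*} [∀ i, Fintype (T i)] [∀ i, MeasurableSpace (T i)]
    [∀ i, MeasurableSingletonClass (T i)]
    {A B : Type*} [Fintype A] [MeasurableSpace A] [MeasurableSingletonClass A]
    [Fintype B] [MeasurableSpace B] [MeasurableSingletonClass B]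
    (S : ∀ i, Ω → T i) (hS : ∀ i, Measurable (S i))
    (hindep : iIndepFun S μ)
    (X : Ω → A) (hX : Measurable X) (Y : Ω → B) (hY : Measurable Y)
    (δ : ℝ) (hδ : 0 ≤ δ)
    (hrec : condEntH μ (jointOn S Finset.univ) (fun ω => (X ω, Y ω)) ≤ δ)
    (hsec : condEntH μ (jointOn S Finset.univ) Y = entH μ (jointOn S Finset.univ))
    (lst : Fin α) (hlast : (lst : ℕ) = α - 1) :
    condEntH μ X
        (fun ω => (jointOn S (Finset.univ.filter (fun i : Fin α => (i : ℕ) + 1 < α)) ω, Y ω)) ≥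
      entH μ (S lst) - δ +
        condEntH μ X (fun ω => (jointOn S Finset.univ ω, Y ω)) := by
  classical
  simp only [condEntH] at hrec hsec ⊢
  set P : Finset (Fin α) := Finset.univ.filter (fun i : Fin α => (i : ℕ) + 1 < α) with hPdef
  have hSall : Measurable (jointOn S Finset.univ) := measurable_pi_lambda _ (fun i => hS i)
  have hS' : Measurable (jointOn S P) := measurable_pi_lambda _ (fun i => hS i)
  have hJ : Measurable (jointOn S ({lst} : Finset (Fin α))) :=
    measurable_pi_lambda _ (fun i => hS i)
  have hmemP : ∀ i : Fin α, (i : ℕ) + 1 < α → i ∈ P := fun i h => by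
    simp [hPdef, h]
  have hcover : ∀ {f g : (i : (Finset.univ : Finset (Fin α))) → T i},
      (∀ i : P, f ⟨i.1, Finset.mem_univ _⟩ = g ⟨i.1, Finset.mem_univ _⟩) →
      f ⟨lst, Finset.mem_univ _⟩ = g ⟨lst, Finset.mem_univ _⟩ → f = g := by
    intro f g h1 h2
    funext j
    by_cases hc : (j.1 : ℕ) + 1 < α
    · exact h1 ⟨j.1, hmemP _ hc⟩
    · have hj1 : j.1 = lst := Fin.ext (by have := j.1.isLt; omega)
      have hj : j = ⟨lst, Finset.mem_univ _⟩ := Subtype.ext hj1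
      rw [hj]; exact h2
  -- E1
  have E1 : entH μ (fun ω => (jointOn S Finset.univ ω, (X ω, Y ω)))
      = entH μ (fun ω => (X ω, (jointOn S Finset.univ ω, Y ω))) := by
    have he : Function.Injective
        (fun c : (((i : (Finset.univ : Finset (Fin α))) → T i) × (A × B)) =>
          (c.2.1, (c.1, c.2.2))) := by
      rintro ⟨f, x, y⟩ ⟨g, x', y'⟩ h
      simp only [Prod.mk.injEq] at h
      simp only [Prod.mk.injEq]
      exact ⟨h.2.1, h.1, h.2.2⟩
    exact (entH_comp_inj μ (fun ω => (jointOn S Finset.univ ω, (X ω, Y ω))) he).symm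
  -- E4
  have E4 : entH μ (fun ω => (X ω, (jointOn S P ω, Y ω)))
      = entH μ (fun ω => (jointOn S P ω, (X ω, Y ω))) := by
    have he : Function.Injective
        (fun c : (A × (((i : P) → T i) × B)) => (c.2.1, (c.1, c.2.2))) := by
      rintro ⟨x, f, y⟩ ⟨x', g, y'⟩ h
      simp only [Prod.mk.injEq] at h
      simp only [Prod.mk.injEq]
      exact ⟨h.2.1, h.1, h.2.2⟩
    exact (entH_comp_inj μ (fun ω => (X ω, (jointOn S P ω, Y ω))) he).symm
  -- E5
  have E5 : entH μ (jointOn S Finset.univ)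
      = entH μ (fun ω => (jointOn S P ω, jointOn S ({lst} : Finset (Fin α)) ω)) := by
    have he : Function.Injective
        (fun f : ((i : (Finset.univ : Finset (Fin α))) → T i) =>
          ((fun i : P => f ⟨i.1, Finset.mem_univ _⟩),
           (fun i : ({lst} : Finset (Fin α)) => f ⟨i.1, Finset.mem_univ _⟩))) := by
      intro f g h
      simp only [Prod.mk.injEq] at h
      exact hcover (fun i => congrFun h.1 i)
        (congrFun h.2 ⟨lst, Finset.mem_singleton_self lst⟩)
    exact (entH_comp_inj μ (jointOn S Finset.univ) he).symm
  -- E6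
  have E6 : entH μ (jointOn S ({lst} : Finset (Fin α))) = entH μ (S lst) := by
    have he : Function.Injective
        (fun f : ((i : ({lst} : Finset (Fin α))) → T i) =>
          f ⟨lst, Finset.mem_singleton_self lst⟩) := by
      intro f g h
      funext i
      have hi : i = ⟨lst, Finset.mem_singleton_self lst⟩ :=
        Subtype.ext (Finset.mem_singleton.mp i.2)
      rw [hi]; exact h
    exact (entH_comp_inj μ (jointOn S ({lst} : Finset (Fin α))) he).symm
  -- Independence
  have hdisj : Disjoint P ({lst} : Finset (Fin α)) := by
    rw [Finset.disjoint_singleton_right]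
    simp only [hPdef, Finset.mem_filter, Finset.mem_univ, true_and, not_lt]
    omega
  have hindepPL : IndepFun (jointOn S P) (jointOn S ({lst} : Finset (Fin α))) μ :=
    hindep.indepFun_finset P {lst} hdisj hS
  have I4 : entH μ (jointOn S Finset.univ) = entH μ (jointOn S P) + entH μ (S lst) := by
    rw [E5, entH_pair_of_indep μ hS' hJ hindepPL, E6]
  -- Inequalities
  have I1 : entH μ (fun ω => (X ω, Y ω))
      ≤ entH μ (fun ω => (jointOn S P ω, (X ω, Y ω))) :=
    entH_comp_le μ (hS'.prodMk (hX.prodMk hY)) Prod.snd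
  have I3 : entH μ (fun ω => (jointOn S P ω, Y ω)) ≤ entH μ (jointOn S P) + entH μ Y :=
    entH_pair_le μ hS' hY
  -- combine: t4 - t1 ≤ δ  and  t5 - t2 ≥ t3
  linarith


/-- **Key entropy lemma for the S-SMDC converse**: if the independent sources `S_1,…,S_α`
can be nearly perfectly reconstructed from `(X, Y)` (`H(S_1,…,S_α | X, Y) ≤ δ`) while `Y`
alone reveals nothing about them (`H(S_1,…,S_α | Y) = H(S_1,…,S_α)`), then
`H(X | S_1,…,S_{α−1}, Y) ≥ H(S_α) − δ + H(X | S_1,…,S_α, Y)`.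
Here the sources are indexed by `i : Fin α`, corresponding to the paper's index `i + 1`;
`S_1,…,S_{α−1}` is the joint over the indices `i` with `i + 1 < α`, and `S_α = S ⟨α−1⟩`. -/
theorem ssmdc_key_entropy_lemma
    {Ω : Type*} [MeasurableSpace Ω] (μ : Measure Ω) [IsProbabilityMeasure μ]
    {α : ℕ} (hα : 1 ≤ α)
    {T : Fin α → Type*} [∀ i, Fintype (T i)] [∀ i, MeasurableSpace (T i)]
    [∀ i, MeasurableSingletonClass (T i)]
    {A B : Type*} [Fintype A] [MeasurableSpace A] [MeasurableSingletonClass A]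
    [Fintype B] [MeasurableSpace B] [MeasurableSingletonClass B]
    (S : ∀ i, Ω → T i) (hS : ∀ i, Measurable (S i))
    (hindep : iIndepFun S μ)
    (X : Ω → A) (hX : Measurable X) (Y : Ω → B) (hY : Measurable Y)
    (δ : ℝ) (hδ : 0 ≤ δ)
    (hrec : condEntH μ (jointOn S Finset.univ) (fun ω => (X ω, Y ω)) ≤ δ)
    (hsec : condEntH μ (jointOn S Finset.univ) Y = entH μ (jointOn S Finset.univ)) :
    condEntH μ X
        (fun ω => (jointOn S (Finset.univ.filter (fun i : Fin α => (i : ℕ) + 1 < α)) ω, Y ω)) ≥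
      entH μ (S ⟨α - 1, by omega⟩) - δ +
        condEntH μ X (fun ω => (jointOn S Finset.univ ω, Y ω)) := by
  exact ssmdc_key_aux μ hα S hS hindep X hX Y hY δ hδ hrec hsec _ rfl
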